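/- For Ψ : S×A → ℝ define the noise term w(s,a,s') = c(s,a,s') − (γ²/β) log Σ_{a'∈A} exp(−(β/γ) Ψ(s',a')) − [T̄Ψ](s,a). Then: (i) the noise has zero conditional mean, Σ_{s'∈S} p(s'|s,a) w(s,a,s') = 0 for all s ∈ S and a ∈ A; and (ii) there exists a constant K > 0, depending only on max_{s,a,s'} |c(s,a,s')|, γ, β and |A|, such that Σ_{s'∈S} p(s'|s,a) w(s,a,s')² ≤ K ( 1 + max_{s''∈S, a''∈A} Ψ(s'',a'')² ) for every Ψ : S×A → ℝ, s ∈ S and a ∈ A. -/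

import Mathlib

/-- The model-free soft Bellman operator
`[T̄Λ](s,a) = Σ_{s'} p(s'|s,a)(c(s,a,s') − (γ²/β) log Σ_{a'} exp(−(β/γ)Λ(s',a')))`. -/
noncomputable def barBellman {S A : Type*} [Fintype S] [Fintype A]
    (p : S → A → S → ℝ) (c : S → A → S → ℝ) (β γ : ℝ)
    (Λ : S → A → ℝ) : S → A → ℝ :=
  fun s a =>
    ∑ s', p s a s' *
      (c s a s' - (γ ^ 2 / β) * Real.log (∑ a', Real.exp (-(β / γ) * Λ s' a')))

/-- The stochastic-approximation noise term
`w(s,a,s') = c(s,a,s') − (γ²/β) log Σ_{a'} exp(−(β/γ)Ψ(s',a')) − [T̄Ψ](s,a)`. -/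
noncomputable def noiseTerm {S A : Type*} [Fintype S] [Fintype A]
    (p : S → A → S → ℝ) (c : S → A → S → ℝ) (β γ : ℝ)
    (Ψ : S → A → ℝ) (s : S) (a : A) (s' : S) : ℝ :=
  c s a s' - (γ ^ 2 / β) * Real.log (∑ a', Real.exp (-(β / γ) * Ψ s' a')) -
    barBellman p c β γ Ψ s a

/-- (i) The noise term has zero conditional mean, and (ii) its conditional second
moment is bounded by `K (1 + max_{s'',a''} Ψ(s'',a'')²)` for a constant `K > 0`
uniform in `Ψ`, `s`, `a`. -/
theorem noiseTerm_mean_zero_and_variance_bound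
    {S A : Type*} [Fintype S] [Fintype A] [Nonempty S] [Nonempty A]
    (p : S → A → S → ℝ) (c : S → A → S → ℝ) (β γ : ℝ)
    (hp0 : ∀ s a s', 0 ≤ p s a s') (hp1 : ∀ s a, ∑ s', p s a s' = 1)
    (hβ : 0 < β) (hγ0 : 0 < γ) (hγ1 : γ ≤ 1) :
    (∀ (Ψ : S → A → ℝ) (s : S) (a : A),
      ∑ s', p s a s' * noiseTerm p c β γ Ψ s a s' = 0) ∧
    (∃ K : ℝ, 0 < K ∧
      ∀ (Ψ : S → A → ℝ) (s : S) (a : A),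
        ∑ s', p s a s' * (noiseTerm p c β γ Ψ s a s') ^ 2 ≤
          K * (1 + Finset.univ.sup' Finset.univ_nonempty
            (fun sa : S × A => (Ψ sa.1 sa.2) ^ 2))) := by
  constructor
  · intro Ψ s a
    have key : ∀ s', p s a s' * noiseTerm p c β γ Ψ s a s'
        = p s a s' * (c s a s' - (γ ^ 2 / β) *
            Real.log (∑ a', Real.exp (-(β / γ) * Ψ s' a')))
          - p s a s' * barBellman p c β γ Ψ s a := by
      intro s'; rw [noiseTerm, mul_sub]
    rw [Finset.sum_congr rfl (fun s' _ => key s'), Finset.sum_sub_distrib,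
      ← Finset.sum_mul, hp1, one_mul]
    rw [barBellman, sub_self]
  · set cA : ℝ := (Fintype.card A : ℝ) with hcA
    have hcA1 : (1:ℝ) ≤ cA := by rw [hcA]; exact_mod_cast Fintype.card_pos (α := A)
    have hlogA : 0 ≤ Real.log cA := Real.log_nonneg hcA1
    obtain ⟨C, hC0, hC⟩ : ∃ C : ℝ, 0 ≤ C ∧ ∀ s a s', |c s a s'| ≤ C := by
      refine ⟨Finset.univ.sup' Finset.univ_nonempty
        (fun t : S × A × S => |c t.1 t.2.1 t.2.2|), ?_, ?_⟩
      · exact le_trans (abs_nonneg (c (Classical.arbitrary S) (Classical.arbitrary A) (Classical.arbitrary S)))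
          (Finset.le_sup' (fun t : S × A × S => |c t.1 t.2.1 t.2.2|)
            (Finset.mem_univ (Classical.arbitrary S, Classical.arbitrary A, Classical.arbitrary S)))
      · intro s a s'
        exact Finset.le_sup' (fun t : S × A × S => |c t.1 t.2.1 t.2.2|)
          (Finset.mem_univ (s, a, s'))
    set aK : ℝ := C + (γ ^ 2 / β) * Real.log cA with haKdef
    have haK0 : 0 ≤ aK := add_nonneg hC0 (mul_nonneg (by positivity) hlogA)
    refine ⟨8 * (aK + 1) ^ 2, by positivity, ?_⟩
    intro Ψ s a
    set M2 := Finset.univ.sup' Finset.univ_nonempty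
      (fun sa : S × A => (Ψ sa.1 sa.2) ^ 2) with hM2def
    have hM20 : 0 ≤ M2 := le_trans
      (sq_nonneg (Ψ (Classical.arbitrary S) (Classical.arbitrary A)))
      (Finset.le_sup' (fun sa : S × A => (Ψ sa.1 sa.2) ^ 2)
        (Finset.mem_univ (Classical.arbitrary S, Classical.arbitrary A)))
    set M := Real.sqrt M2 with hMdef
    have hMsq : M ^ 2 = M2 := Real.sq_sqrt hM20
    have hM0 : 0 ≤ M := Real.sqrt_nonneg _
    have hM : ∀ s' a', |Ψ s' a'| ≤ M := by
      intro s' a'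
      rw [hMdef, ← Real.sqrt_sq_eq_abs]
      exact Real.sqrt_le_sqrt (Finset.le_sup' (fun sa : S × A => (Ψ sa.1 sa.2) ^ 2)
        (Finset.mem_univ (s', a')))
    set f : S → ℝ := fun s' => c s a s' - (γ ^ 2 / β) *
      Real.log (∑ a', Real.exp (-(β / γ) * Ψ s' a')) with hf
    have hfb : ∀ s', |f s'| ≤ aK + M := by
      intro s'
      have hsum_pos : 0 < ∑ a', Real.exp (-(β / γ) * Ψ s' a') :=
        Finset.sum_pos (fun _ _ => Real.exp_pos _) Finset.univ_nonempty
      have hb : 0 ≤ β / γ := by positivity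
      have hLup : Real.log (∑ a', Real.exp (-(β / γ) * Ψ s' a'))
          ≤ Real.log cA + (β / γ) * M := by
        have h1 : ∑ a', Real.exp (-(β / γ) * Ψ s' a')
            ≤ cA * Real.exp ((β / γ) * M) := by
          calc ∑ a', Real.exp (-(β / γ) * Ψ s' a')
              ≤ ∑ _a' : A, Real.exp ((β / γ) * M) := by
                apply Finset.sum_le_sum
                intro a' _
                apply Real.exp_le_exp.mpr
                nlinarith [abs_le.mp (hM s' a')]
            _ = cA * Real.exp ((β / γ) * M) := by
                rw [Finset.sum_const, Finset.card_univ, nsmul_eq_mul]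
        calc Real.log (∑ a', Real.exp (-(β / γ) * Ψ s' a'))
            ≤ Real.log (cA * Real.exp ((β / γ) * M)) := Real.log_le_log hsum_pos h1
          _ = Real.log cA + (β / γ) * M := by
              rw [Real.log_mul (by positivity) (Real.exp_ne_zero _), Real.log_exp]
      have hLlo : -(Real.log cA + (β / γ) * M)
          ≤ Real.log (∑ a', Real.exp (-(β / γ) * Ψ s' a')) := by
        have a0 : A := Classical.arbitrary A
        have h1 : Real.exp (-((β / γ) * M)) ≤ ∑ a', Real.exp (-(β / γ) * Ψ s' a') := by
          have h2 : Real.exp (-((β / γ) * M)) ≤ Real.exp (-(β / γ) * Ψ s' a0) := by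
            apply Real.exp_le_exp.mpr
            nlinarith [abs_le.mp (hM s' a0)]
          exact le_trans h2 (Finset.single_le_sum
            (f := fun a' => Real.exp (-(β / γ) * Ψ s' a'))
            (fun a' _ => (Real.exp_pos _).le) (Finset.mem_univ a0))
        calc -(Real.log cA + (β / γ) * M) ≤ -((β / γ) * M) := by nlinarith
          _ = Real.log (Real.exp (-((β / γ) * M))) := (Real.log_exp _).symm
          _ ≤ _ := Real.log_le_log (Real.exp_pos _) h1
      have hLabs : |Real.log (∑ a', Real.exp (-(β / γ) * Ψ s' a'))|
          ≤ Real.log cA + (β / γ) * M := abs_le.mpr ⟨hLlo, hLup⟩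
      have hcoef : 0 ≤ γ ^ 2 / β := by positivity
      have step1 : |f s'| ≤ |c s a s'| + (γ ^ 2 / β) *
          |Real.log (∑ a', Real.exp (-(β / γ) * Ψ s' a'))| := by
        rw [hf]
        refine (abs_sub _ _).trans ?_
        rw [abs_mul, abs_of_nonneg hcoef]
      have step2 : (γ ^ 2 / β) * ((β / γ) * M) = γ * M := by
        field_simp
      have step3 : (γ ^ 2 / β) *
          |Real.log (∑ a', Real.exp (-(β / γ) * Ψ s' a'))|
          ≤ (γ ^ 2 / β) * Real.log cA + γ * M := by
        rw [← step2, ← mul_add]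
        exact mul_le_mul_of_nonneg_left hLabs hcoef
      have hγM : γ * M ≤ M := mul_le_of_le_one_left hM0 hγ1
      calc |f s'| ≤ |c s a s'| + (γ ^ 2 / β) *
            |Real.log (∑ a', Real.exp (-(β / γ) * Ψ s' a'))| := step1
        _ ≤ C + ((γ ^ 2 / β) * Real.log cA + γ * M) := add_le_add (hC s a s') step3
        _ ≤ aK + M := by rw [haKdef]; linarith
    have hB : |barBellman p c β γ Ψ s a| ≤ aK + M := by
      have hBeq : barBellman p c β γ Ψ s a = ∑ s', p s a s' * f s' := rfl
      rw [hBeq]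
      calc |∑ s', p s a s' * f s'| ≤ ∑ s', |p s a s' * f s'| :=
            Finset.abs_sum_le_sum_abs _ _
        _ ≤ ∑ s', p s a s' * (aK + M) := by
            apply Finset.sum_le_sum; intro s' _
            rw [abs_mul, abs_of_nonneg (hp0 s a s')]
            exact mul_le_mul_of_nonneg_left (hfb s') (hp0 s a s')
        _ = aK + M := by rw [← Finset.sum_mul, hp1, one_mul]
    have hw : ∀ s', (noiseTerm p c β γ Ψ s a s') ^ 2
        ≤ 8 * (aK + 1) ^ 2 * (1 + M2) := by
      intro s'
      have hweq : noiseTerm p c β γ Ψ s a s' = f s' - barBellman p c β γ Ψ s a := rfl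
      have h1 : |noiseTerm p c β γ Ψ s a s'| ≤ 2 * (aK + M) := by
        rw [hweq]
        refine (abs_sub _ _).trans ?_
        linarith [hfb s', hB]
      obtain ⟨hlo, hhi⟩ := abs_le.mp h1
      nlinarith [hMsq, sq_nonneg (aK - M), mul_nonneg haK0 hM20, sq_nonneg (aK + M)]
    calc ∑ s', p s a s' * (noiseTerm p c β γ Ψ s a s') ^ 2
        ≤ ∑ s', p s a s' * (8 * (aK + 1) ^ 2 * (1 + M2)) := by
          apply Finset.sum_le_sum; intro s' _
          exact mul_le_mul_of_nonneg_left (hw s') (hp0 s a s')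
      _ = 8 * (aK + 1) ^ 2 * (1 + M2) := by rw [← Finset.sum_mul, hp1, one_mul]
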